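/- For all integers m and n, setting x = 4(n^2-4mn-4m^2)(5n^2+8mn+4m^2)(7n^2+12mn+4m^2), y = 3(n^2-4mn-4m^2)(5n^2+8mn+4m^2)(7n^2+12mn+4m^2), z = 32n(n+m)(n+2m)(3n+2m)(5n^2+8mn+4m^2), a = 5(n^2-4mn-4m^2)(5n^2+8mn+4m^2)(7n^2+12mn+4m^2), b = 4(5n^2+8mn+4m^2)^3, c1 = (7n^2+12mn+4m^2)(9n^2+20mn+12m^2)(11n^2+12mn+4m^2), c2 = (n^2-4mn-4m^2)(3n^2+4mn+4m^2)(17n^2+28mn+12m^2), d1 = (7n^2+12mn+4m^2)(101n^4+312mn^3+424m^2n^2+288m^3n+80m^4), d2 = (n^2-4mn-4m^2)(149n^4+488mn^3+616m^2n^2+352m^3n+80m^4), all seven equations hold: x^2+y^2=a^2, x^2+z^2=b^2, x^2+c1^2=d1^2, x^2+c2^2=d2^2, 2y^2+2z^2=c1^2+c2^2, 2y^2+2b^2=d1^2+d2^2, and 2a^2+2z^2=d1^2+d2^2. -/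
import Mathlib


theorem stmt_8 (m n x y z a b c1 c2 d1 d2 : ℤ)
    (hx : x = 4*(n^2-4*m*n-4*m^2)*(5*n^2+8*m*n+4*m^2)*(7*n^2+12*m*n+4*m^2))
    (hy : y = 3*(n^2-4*m*n-4*m^2)*(5*n^2+8*m*n+4*m^2)*(7*n^2+12*m*n+4*m^2))
    (hz : z = 32*n*(n+m)*(n+2*m)*(3*n+2*m)*(5*n^2+8*m*n+4*m^2))
    (ha : a = 5*(n^2-4*m*n-4*m^2)*(5*n^2+8*m*n+4*m^2)*(7*n^2+12*m*n+4*m^2))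
    (hb : b = 4*(5*n^2+8*m*n+4*m^2)^3)
    (hc1 : c1 = (7*n^2+12*m*n+4*m^2)*(9*n^2+20*m*n+12*m^2)*(11*n^2+12*m*n+4*m^2))
    (hc2 : c2 = (n^2-4*m*n-4*m^2)*(3*n^2+4*m*n+4*m^2)*(17*n^2+28*m*n+12*m^2))
    (hd1 : d1 = (7*n^2+12*m*n+4*m^2)*(101*n^4+312*m*n^3+424*m^2*n^2+288*m^3*n+80*m^4))
    (hd2 : d2 = (n^2-4*m*n-4*m^2)*(149*n^4+488*m*n^3+616*m^2*n^2+352*m^3*n+80*m^4)) :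
    x^2 + y^2 = a^2 ∧ x^2 + z^2 = b^2 ∧ x^2 + c1^2 = d1^2 ∧ x^2 + c2^2 = d2^2 ∧ 2*y^2 + 2*z^2 = c1^2 + c2^2 ∧ 2*y^2 + 2*b^2 = d1^2 + d2^2 ∧ 2*a^2 + 2*z^2 = d1^2 + d2^2 := by
  subst hx hy hz ha hb hc1 hc2 hd1 hd2
  refine ⟨by ring, by ring, by ring, by ring, by ring, by ring, by ring⟩
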